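/- Let P = ⟨x₁,…,x_m | r₁,…,rₙ⟩ be a finite presentation, let k₁,…,kₙ ∈ ℕ with each kᵢ ≥ 1, and let Q = ⟨x₁,…,x_m | r₁^{k₁},…,rₙ^{kₙ}⟩. Then torlen(Q̄) − 1 ≤ torlen(P̄) ≤ torlen(Q̄); precisely, for every m ∈ ℕ: (1) if tor_m(Q̄) = tor_{m+1}(Q̄) then tor_m(P̄) = tor_{m+1}(P̄); and (2) if tor_m(P̄) = tor_{m+1}(P̄) then tor_{m+1}(Q̄) = tor_{m+2}(Q̄). -/

import Mathlib

/-- The ascending chain of normal subgroups `tor₀(G) = 1`,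
`tor_{n+1}(G) = ⟪elements of finite order mod tor_n(G)⟫`. -/
def tor (G : Type*) [Group G] : ℕ → Subgroup G
  | 0 => ⊥
  | n + 1 => Subgroup.normalClosure {g : G | ∃ k : ℕ, 0 < k ∧ g ^ k ∈ tor G n}

lemma tor_succ (G : Type*) [Group G] (n : ℕ) :
    tor G (n + 1) = Subgroup.normalClosure {g : G | ∃ k : ℕ, 0 < k ∧ g ^ k ∈ tor G n} := rfl

lemma tor_normal (G : Type*) [Group G] : ∀ n, (tor G n).Normal
  | 0 => inferInstanceAs (⊥ : Subgroup G).Normal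
  | _ + 1 => Subgroup.normalClosure_normal

lemma tor_le_succ (G : Type*) [Group G] (n : ℕ) : tor G n ≤ tor G (n + 1) := fun g hg =>
  Subgroup.subset_normalClosure ⟨1, one_pos, by simpa using hg⟩

lemma tor_mono (G : Type*) [Group G] : Monotone (tor G) :=
  monotone_nat_of_le_succ (tor_le_succ G)

/-- If every element with a power in `tor G j` already lies in `tor G j`, the chain
stabilises at `j`. -/
lemma tor_stab {G : Type*} [Group G] (j : ℕ)
    (h : ∀ g : G, ∀ kk : ℕ, 0 < kk → g ^ kk ∈ tor G j → g ∈ tor G j) :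
    tor G j = tor G (j + 1) := by
  refine le_antisymm (tor_le_succ G j) ?_
  have : (tor G j).Normal := tor_normal G j
  rw [tor_succ]
  exact Subgroup.normalClosure_le_normal fun g hg => h g hg.choose hg.choose_spec.1
    hg.choose_spec.2

lemma map_tor_le {G H : Type*} [Group G] [Group H] (f : G →* H) (hf : Function.Surjective f) :
    ∀ n, (tor G n).map f ≤ tor H n
  | 0 => by simp [tor]
  | n + 1 => by
    rw [tor_succ, tor_succ, Subgroup.map_normalClosure _ _ hf]
    refine Subgroup.normalClosure_mono ?_
    rintro _ ⟨g, ⟨k, hk, hgk⟩, rfl⟩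
    exact ⟨k, hk, by rw [← map_pow]; exact map_tor_le f hf n ⟨g ^ k, hgk, rfl⟩⟩

lemma comap_tor_le {G H : Type*} [Group G] [Group H] (f : G →* H) (hf : Function.Surjective f)
    (hker : f.ker ≤ tor G 1) : ∀ n, (tor H n).comap f ≤ tor G (n + 1)
  | 0 => by
    intro x hx
    simp only [Subgroup.mem_comap, tor, Subgroup.mem_bot] at hx
    exact hker hx
  | n + 1 => by
    intro x hx
    simp only [Subgroup.mem_comap] at hx
    have key : tor H (n + 1) =
        (Subgroup.normalClosure (f ⁻¹' {h : H | ∃ k : ℕ, 0 < k ∧ h ^ k ∈ tor H n})).map f := by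
      rw [Subgroup.map_normalClosure _ _ hf, Set.image_preimage_eq _ hf, tor_succ]
    rw [key] at hx
    obtain ⟨y, hy, hyx⟩ := hx
    have hNle : Subgroup.normalClosure (f ⁻¹' {h : H | ∃ k : ℕ, 0 < k ∧ h ^ k ∈ tor H n}) ≤
        tor G (n + 2) := by
      have : (tor G (n + 2)).Normal := tor_normal G (n + 2)
      refine Subgroup.normalClosure_le_normal ?_
      rintro g ⟨k, hk, hgk⟩
      rw [tor_succ]
      exact Subgroup.subset_normalClosure
        ⟨k, hk, comap_tor_le f hf hker n (by simpa [Subgroup.mem_comap, map_pow] using hgk)⟩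
    have hx1 : y⁻¹ * x ∈ f.ker := by simp [MonoidHom.mem_ker, hyx]
    have hxy : x = y * (y⁻¹ * x) := by group
    rw [hxy]
    exact mul_mem (hNle hy) (tor_mono G (by omega : 1 ≤ n + 2) (hker hx1))

/-- Remark: for `P = ⟨x₁,…,x_m | r₁,…,rₙ⟩` and `Q = ⟨x₁,…,x_m | r₁^{k₁},…,rₙ^{kₙ}⟩`
with all `kᵢ ≥ 1`, we have `torlen(Q̄) − 1 ≤ torlen(P̄) ≤ torlen(Q̄)`: for every `j`,
if the torsion chain of `Q̄` stabilises at step `j` then so does that of `P̄`, and if the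
torsion chain of `P̄` stabilises at step `j` then that of `Q̄` stabilises at step `j+1`. -/
theorem torlen_powers_estimate {m n : ℕ} (r : Fin n → FreeGroup (Fin m))
    (k : Fin n → ℕ) (hk : ∀ i, 1 ≤ k i) :
    ∀ j : ℕ,
      (tor (PresentedGroup (Set.range fun i => r i ^ k i)) j =
          tor (PresentedGroup (Set.range fun i => r i ^ k i)) (j + 1) →
        tor (PresentedGroup (Set.range r)) j =
          tor (PresentedGroup (Set.range r)) (j + 1)) ∧
      (tor (PresentedGroup (Set.range r)) j =
          tor (PresentedGroup (Set.range r)) (j + 1) →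
        tor (PresentedGroup (Set.range fun i => r i ^ k i)) (j + 1) =
          tor (PresentedGroup (Set.range fun i => r i ^ k i)) (j + 2)) := by
  set N : Subgroup (FreeGroup (Fin m)) := Subgroup.normalClosure (Set.range fun i => r i ^ k i)
    with hN
  set M : Subgroup (FreeGroup (Fin m)) := Subgroup.normalClosure (Set.range r) with hM
  have hNM : N ≤ M := by
    refine Subgroup.normalClosure_le_normal ?_
    rintro _ ⟨i, rfl⟩
    show r i ^ k i ∈ M
    exact pow_mem (Subgroup.subset_normalClosure (Set.mem_range_self i)) _
  -- the natural surjection π : Q̄ → P̄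
  let π : PresentedGroup (Set.range fun i => r i ^ k i) →* PresentedGroup (Set.range r) :=
    QuotientGroup.map N M (MonoidHom.id _) hNM
  have hπmk : ∀ w : FreeGroup (Fin m),
      π (QuotientGroup.mk' N w) = QuotientGroup.mk' M w := fun w => rfl
  have hmkN : Function.Surjective (QuotientGroup.mk' N) := QuotientGroup.mk'_surjective N
  have hπ : Function.Surjective π := by
    intro x
    obtain ⟨w, rfl⟩ := QuotientGroup.mk'_surjective M x
    exact ⟨QuotientGroup.mk' N w, rfl⟩
  have hker : π.ker ≤ tor (PresentedGroup (Set.range fun i => r i ^ k i)) 1 := by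
    intro x hx
    obtain ⟨w, rfl⟩ := hmkN x
    replace hx : QuotientGroup.mk' M w = 1 := hx
    have hw : w ∈ M := (QuotientGroup.eq_one_iff w).mp hx
    have h2 : QuotientGroup.mk' N w ∈
        Subgroup.normalClosure ((QuotientGroup.mk' N) '' Set.range r) := by
      rw [← Subgroup.map_normalClosure _ _ hmkN]
      exact ⟨w, hw, rfl⟩
    rw [tor_succ]
    refine Subgroup.normalClosure_mono ?_ h2
    rintro _ ⟨_, ⟨i, rfl⟩, rfl⟩
    refine ⟨k i, hk i, ?_⟩
    show QuotientGroup.mk' N (r i) ^ k i ∈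
      (⊥ : Subgroup (PresentedGroup (Set.range fun i => r i ^ k i)))
    refine Subgroup.mem_bot.mpr ((map_pow (QuotientGroup.mk' N) (r i) (k i)).symm.trans ?_)
    exact (QuotientGroup.eq_one_iff _).mpr
      (Subgroup.subset_normalClosure (Set.mem_range_self i))
  intro j
  constructor
  · -- Q stabilises at j → P stabilises at j
    intro hQ
    refine tor_stab j ?_
    intro h kk hkk hpow
    obtain ⟨g, rfl⟩ := hπ h
    have hg : g ^ kk ∈ tor (PresentedGroup (Set.range fun i => r i ^ k i)) j := by
      rw [hQ]
      exact comap_tor_le π hπ hker j (by simpa [Subgroup.mem_comap, map_pow] using hpow)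
    have hgj : g ∈ tor (PresentedGroup (Set.range fun i => r i ^ k i)) j := by
      rw [hQ, tor_succ]
      exact Subgroup.subset_normalClosure ⟨kk, hkk, hg⟩
    exact map_tor_le π hπ j ⟨g, hgj, rfl⟩
  · -- P stabilises at j → Q stabilises at j+1
    intro hP
    refine tor_stab (j + 1) ?_
    intro g kk hkk hpow
    have h1 : π g ^ kk ∈ tor (PresentedGroup (Set.range r)) j := by
      rw [hP, ← map_pow]
      exact map_tor_le π hπ (j + 1) ⟨g ^ kk, hpow, rfl⟩
    have h2 : π g ∈ tor (PresentedGroup (Set.range r)) j := by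
      rw [hP, tor_succ]
      exact Subgroup.subset_normalClosure ⟨kk, hkk, h1⟩
    exact comap_tor_le π hπ hker j h2
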